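/- For every non-negative integer m and every non-negative integer k, Σ_{n=0}^m [(m+1)_n · ⟨m⟩_n · (m+1)_{k+n} · (k+m+2n+1)] / [n! · (k+n)! · (2m+2)_{k+n}] = 2^(2m+1) · Γ(m+3/2) / (√π · (m+k)!). -/

import Mathlib

set_option linter.all false
set_option maxHeartbeats 1000000

/-- Rising factorial (Pochhammer symbol) `(x)_n`. -/
def risingFac (x : ℝ) (n : ℕ) : ℝ := ∏ i ∈ Finset.range n, (x + i)

/-- Falling factorial `⟨x⟩_n = x(x-1)⋯(x-n+1)`. -/
def fallingFac (x : ℝ) (n : ℕ) : ℝ := ∏ i ∈ Finset.range n, (x - i)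

lemma risingFac_succ (x : ℝ) (n : ℕ) : risingFac x (n+1) = risingFac x n * (x + n) :=
  Finset.prod_range_succ _ _

lemma fallingFac_zero (x : ℝ) : fallingFac x 0 = 1 := Finset.prod_range_zero _

lemma fallingFac_succ (x : ℝ) (n : ℕ) : fallingFac x (n+1) = fallingFac x n * (x - n) :=
  Finset.prod_range_succ _ _

lemma fallingFac_succ_succ (x : ℝ) (n : ℕ) : fallingFac (x+1) (n+1) = (x+1) * fallingFac x n := by
  unfold fallingFac
  rw [Finset.prod_range_succ']
  simp only [Nat.cast_zero, sub_zero, Nat.cast_add, Nat.cast_one]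
  rw [mul_comm]
  congr 1
  exact Finset.prod_congr rfl fun i _ => by ring

lemma fallingFac_zero_of_lt (m n : ℕ) (h : m < n) : fallingFac (m:ℝ) n = 0 := by
  unfold fallingFac
  apply Finset.prod_eq_zero (Finset.mem_range.mpr h)
  simp

lemma fact_risingFac (c n : ℕ) :
    (c.factorial : ℝ) * risingFac ((c:ℝ) + 1) n = ((c+n).factorial : ℝ) := by
  induction n with
  | zero => simp [risingFac]
  | succ n ih =>
    rw [risingFac_succ, ← mul_assoc, ih, show c+(n+1) = (c+n)+1 from rfl, Nat.factorial_succ]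
    push_cast; ring

noncomputable def A (m k n : ℕ) : ℝ :=
  fallingFac m n * ((m+n).factorial) * ((m+k+n).factorial) * ((k:ℝ)+m+2*n+1) /
    ((m.factorial) * (n.factorial) * ((k+n).factorial) * ((2*m+k+n+1).factorial))

noncomputable def g (m k n : ℕ) : ℝ :=
  (n:ℝ) * fallingFac m n * ((m+n).factorial) * ((m+k+n).factorial) /
    ((m.factorial) * (n.factorial) * ((k+n).factorial) * ((2*m+k+n+1).factorial))

noncomputable def Gm (m n : ℕ) : ℝ :=
  -(n:ℝ)^2 * ((n:ℝ)+3*m+3) * fallingFac ((m:ℝ)+1) n * (((m+n).factorial :ℝ))^2 /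
    (((m+1).factorial) * ((n.factorial :ℝ))^2 * ((2*m+n+2).factorial))

lemma idK (m k n : ℕ) :
    ((m:ℝ)+k+1) * A m (k+1) n = A m k n + (g m k (n+1) - g m k n) := by
  unfold A g
  rw [fallingFac_succ]
  have e1 : m+(k+1)+n = (m+k+n)+1 := by omega
  have e2 : (k+1)+n = (k+n)+1 := by omega
  have e3 : 2*m+(k+1)+n+1 = (2*m+k+n+1)+1 := by omega
  have e4 : m+(n+1) = (m+n)+1 := by omega
  have e5 : m+k+(n+1) = (m+k+n)+1 := by omega
  have e6 : k+(n+1) = (k+n)+1 := by omega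
  have e7 : 2*m+k+(n+1)+1 = (2*m+k+n+1)+1 := by omega
  rw [e1, e2, e3, e4, e5, e6, e7]
  simp only [Nat.factorial_succ]
  push_cast
  have h3 : (m.factorial : ℝ) ≠ 0 := by positivity
  have h4 : (n.factorial : ℝ) ≠ 0 := by positivity
  have h5 : ((k+n).factorial : ℝ) ≠ 0 := by positivity
  have h6 : ((2*m+k+n+1).factorial : ℝ) ≠ 0 := by positivity
  have p1 : (n:ℝ)+1 ≠ 0 := by positivity
  have p2 : (k:ℝ)+n+1 ≠ 0 := by positivity
  have p3 : 2*(m:ℝ)+k+n+1+1 ≠ 0 := by positivity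
  field_simp
  ring

lemma idM (m n : ℕ) :
    ((m:ℝ)+1) * A (m+1) 0 n = A m 0 n + (Gm m (n+1) - Gm m n) := by
  have h3 : (m.factorial : ℝ) ≠ 0 := by positivity
  cases n with
  | zero =>
    unfold A Gm
    simp only [fallingFac_zero, fallingFac_succ, fallingFac_zero, Nat.add_zero, Nat.zero_add,
      Nat.factorial_zero]
    have e3 : 2*(m+1)+1 = 2*m+1+1+1 := by omega
    have e8 : 2*m+1+2 = 2*m+1+1+1 := by omega
    have e9 : 2*m+2 = 2*m+1+1 := by omega
    rw [e3, e8, e9]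
    simp only [Nat.factorial_succ, Nat.factorial_zero, Nat.factorial_one]
    have h6 : ((2*m+1).factorial : ℝ) ≠ 0 := by positivity
    push_cast
    field_simp
    ring
  | succ n =>
    unfold A Gm
    have f1 : fallingFac ((↑(m+1) : ℝ)) (n+1) = ((m:ℝ)+1) * fallingFac (m:ℝ) n := by
      push_cast; rw [fallingFac_succ_succ]
    have f3 : fallingFac ((m:ℝ)+1) (n+1) = ((m:ℝ)+1) * fallingFac (m:ℝ) n :=
      fallingFac_succ_succ _ _
    have f4 : fallingFac ((m:ℝ)+1) (n+1+1) = ((m:ℝ)+1) * (fallingFac (m:ℝ) n * ((m:ℝ) - n)) := by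
      rw [fallingFac_succ_succ, fallingFac_succ]
    rw [f1, f4, f3, fallingFac_succ]
    simp only [Nat.add_zero, Nat.zero_add]
    have a1 : m+1+(n+1) = m+n+1+1 := by omega
    have a2 : 2*(m+1)+(n+1)+1 = 2*m+n+1+1+1+1 := by omega
    have a3 : m+(n+1+1) = m+n+1+1 := by omega
    have a5 : 2*m+(n+1+1)+2 = 2*m+n+1+1+1+1 := by omega
    have a6 : 2*m+(n+1)+2 = 2*m+n+1+1+1 := by omega
    have a7 : 2*m+(n+1)+1 = 2*m+n+1+1 := by omega
    have a4 : m+(n+1) = m+n+1 := by omega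
    rw [a1, a2, a3, a5, a6, a7, a4]
    simp only [Nat.factorial_succ]
    have h4 : (n.factorial : ℝ) ≠ 0 := by positivity
    have h6 : ((2*m+n+1).factorial : ℝ) ≠ 0 := by positivity
    have p1 : (n:ℝ)+1 ≠ 0 := by positivity
    have p2 : (m:ℝ)+1 ≠ 0 := by positivity
    have p3 : (m:ℝ)+n+1 ≠ 0 := by positivity
    have p4 : 2*(m:ℝ)+n+1+1 ≠ 0 := by positivity
    have p5 : 2*(m:ℝ)+n+1+1+1 ≠ 0 := by positivity
    push_cast
    field_simp
    ring

lemma A_zero_of_lt (m k n : ℕ) (h : m < n) : A m k n = 0 := by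
  unfold A; rw [fallingFac_zero_of_lt m n h]; ring

lemma g_zero (m k : ℕ) : g m k 0 = 0 := by unfold g; simp

lemma g_top (m k : ℕ) : g m k (m+1) = 0 := by
  unfold g; rw [fallingFac_zero_of_lt m (m+1) (by omega)]; ring

lemma Gm_zero (m : ℕ) : Gm m 0 = 0 := by unfold Gm; simp

lemma Gm_top (m : ℕ) : Gm m (m+2) = 0 := by
  unfold Gm
  have : ((m:ℝ)+1) = ((m+1 : ℕ):ℝ) := by push_cast; ring
  rw [this, fallingFac_zero_of_lt (m+1) (m+2) (by omega)]
  ring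

lemma sumA0 (m : ℕ) : ∑ n ∈ Finset.range (m+1), A m 0 n = 1 / (m.factorial) := by
  induction m with
  | zero => simp [A, fallingFac_zero]
  | succ m ih =>
    have hm : ((m:ℝ)+1) ≠ 0 := by positivity
    have key : ((m:ℝ)+1) * ∑ n ∈ Finset.range (m+2), A (m+1) 0 n = 1 / (m.factorial) := by
      rw [Finset.mul_sum]
      calc ∑ n ∈ Finset.range (m+2), ((m:ℝ)+1) * A (m+1) 0 n
          = ∑ n ∈ Finset.range (m+2), (A m 0 n + (Gm m (n+1) - Gm m n)) :=
            Finset.sum_congr rfl fun n _ => idM m n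
        _ = (∑ n ∈ Finset.range (m+2), A m 0 n)
            + ∑ n ∈ Finset.range (m+2), (Gm m (n+1) - Gm m n) := Finset.sum_add_distrib
        _ = 1 / (m.factorial) := by
            rw [Finset.sum_range_sub (fun n => Gm m n), Finset.sum_range_succ, ih,
              A_zero_of_lt m 0 (m+1) (by omega), Gm_top, Gm_zero]
            ring
    have h2 : (∑ n ∈ Finset.range (m+2), A (m+1) 0 n) = 1 / (((m:ℝ)+1) * (m.factorial)) := by
      field_simp at key ⊢
      linarith [key]
    rw [h2, Nat.factorial_succ]
    push_cast
    ring_nf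

lemma sumA (m k : ℕ) : ∑ n ∈ Finset.range (m+1), A m k n = 1 / ((m+k).factorial) := by
  induction k with
  | zero => simpa using sumA0 m
  | succ k ih =>
    have hmk : ((m:ℝ)+k+1) ≠ 0 := by positivity
    have key : ((m:ℝ)+k+1) * ∑ n ∈ Finset.range (m+1), A m (k+1) n = 1 / ((m+k).factorial) := by
      rw [Finset.mul_sum]
      calc ∑ n ∈ Finset.range (m+1), ((m:ℝ)+k+1) * A m (k+1) n
          = ∑ n ∈ Finset.range (m+1), (A m k n + (g m k (n+1) - g m k n)) :=
            Finset.sum_congr rfl fun n _ => idK m k n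
        _ = (∑ n ∈ Finset.range (m+1), A m k n)
            + ∑ n ∈ Finset.range (m+1), (g m k (n+1) - g m k n) := Finset.sum_add_distrib
        _ = 1 / ((m+k).factorial) := by
            rw [Finset.sum_range_sub (fun n => g m k n), ih, g_top, g_zero]; ring
    have hf : ((m+k).factorial : ℝ) ≠ 0 := by positivity
    have e : m+(k+1) = (m+k)+1 := by omega
    rw [e, Nat.factorial_succ]
    field_simp at key ⊢
    push_cast
    linarith [key]

lemma gammaFact (m : ℕ) :
    Real.Gamma ((m:ℝ) + 3/2) * (4^m * (m.factorial) * 2) = ((2*m+1).factorial) * Real.sqrt Real.pi := by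
  induction m with
  | zero =>
    simp only [Nat.cast_zero, zero_add, pow_zero, Nat.factorial]
    have h : (3/2 : ℝ) = 1/2 + 1 := by norm_num
    rw [h, Real.Gamma_add_one (by norm_num), Real.Gamma_one_half_eq]
    norm_num
    ring
  | succ m ih =>
    have h : ((m:ℝ)+1) + 3/2 = ((m:ℝ) + 3/2) + 1 := by ring
    have hne : ((m:ℝ) + 3/2) ≠ 0 := by positivity
    have e1 : 2*(m+1)+1 = (2*m+1)+1+1 := by omega
    push_cast
    rw [h, Real.Gamma_add_one hne, e1]
    have e2 : (((2*m+1)+1+1).factorial : ℝ) = (2*(m:ℝ)+3)*(2*(m:ℝ)+2) * ((2*m+1).factorial) := by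
      simp only [Nat.factorial_succ]; push_cast; ring
    have e3 : ((m+1).factorial : ℝ) = ((m:ℝ)+1) * (m.factorial) := by
      rw [Nat.factorial_succ]; push_cast; ring
    rw [e2]
    push_cast [e3]
    linear_combination ((2*(m:ℝ)+3)*(2*(m:ℝ)+2))*ih

theorem finite_sum_gamma_identity (m k : ℕ) :
    ∑ n ∈ Finset.range (m + 1),
      risingFac ((m : ℝ) + 1) n * fallingFac (m : ℝ) n * risingFac ((m : ℝ) + 1) (k + n)
          * ((k : ℝ) + m + 2 * n + 1) /
        ((n.factorial : ℝ) * ((k + n).factorial : ℝ) * risingFac (2 * (m : ℝ) + 2) (k + n)) =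
      2 ^ (2 * m + 1) * Real.Gamma ((m : ℝ) + 3 / 2) /
        (Real.sqrt Real.pi * ((m + k).factorial : ℝ)) := by
  have hm' : (m.factorial : ℝ) ≠ 0 := by positivity
  have h2m' : ((2*m+1).factorial : ℝ) ≠ 0 := by positivity
  have hterm : ∀ n : ℕ,
      risingFac ((m : ℝ) + 1) n * fallingFac (m : ℝ) n * risingFac ((m : ℝ) + 1) (k + n)
          * ((k : ℝ) + m + 2 * n + 1) /
        ((n.factorial : ℝ) * ((k + n).factorial : ℝ) * risingFac (2 * (m : ℝ) + 2) (k + n))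
      = ((2*m+1).factorial : ℝ)/(m.factorial) * A m k n := by
    intro n
    have r1 : risingFac ((m:ℝ)+1) n = ((m+n).factorial : ℝ)/(m.factorial) := by
      rw [eq_div_iff hm', mul_comm]; exact fact_risingFac m n
    have r2 : risingFac ((m:ℝ)+1) (k+n) = ((m+k+n).factorial : ℝ)/(m.factorial) := by
      rw [eq_div_iff hm', mul_comm, show m+k+n = m+(k+n) from by omega]
      exact fact_risingFac m (k+n)
    have r3 : risingFac (2*(m:ℝ)+2) (k+n) = ((2*m+k+n+1).factorial : ℝ)/((2*m+1).factorial) := by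
      have hc : (2*(m:ℝ)+2) = ((2*m+1:ℕ):ℝ)+1 := by push_cast; ring
      rw [hc, eq_div_iff h2m', mul_comm, show 2*m+k+n+1 = (2*m+1)+(k+n) from by omega]
      exact fact_risingFac (2*m+1) (k+n)
    rw [r1, r2, r3]
    unfold A
    have h4 : (n.factorial : ℝ) ≠ 0 := by positivity
    have h5 : ((k+n).factorial : ℝ) ≠ 0 := by positivity
    have h6 : ((2*m+k+n+1).factorial : ℝ) ≠ 0 := by positivity
    field_simp
  rw [Finset.sum_congr rfl (fun n _ => hterm n), ← Finset.mul_sum, sumA]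
  have hg := gammaFact m
  have hπ : Real.sqrt Real.pi ≠ 0 := ne_of_gt (Real.sqrt_pos.mpr Real.pi_pos)
  have hmk : ((m+k).factorial : ℝ) ≠ 0 := by positivity
  have h2 : (2:ℝ)^(2*m+1) = 2 * 4^m := by
    rw [pow_succ, pow_mul]; norm_num; ring
  rw [h2]
  set Γv := Real.Gamma ((m:ℝ) + 3/2) with hΓ
  field_simp
  linear_combination (-1 : ℝ) * hg
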